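/- Let i' ≤ i ≤ n be natural numbers and set j = n − i. Regard Ω_{≤i'}(Fin i), the poset of nonempty subsets of Fin i of cardinality at most i' ordered by inclusion, as a (Σi × Σj)-poset with the first factor acting elementwise and the second factor acting trivially. Then the induced Σn-poset Ind_{Σi×Σj}^{Σn} Ω_{≤i'}(Fin i) is Σn-equivariantly order-isomorphic to the Σn-poset Ω_{≤i',i}(Fin n) of flags (U, V) of subsets of Fin n with ∅ ≠ U ⊆ V, |U| ≤ i', |V| = i, ordered by componentwise inclusion; the isomorphism sends the class of (σ, U) to the flag (σ • ι(U), σ • ι(Fin i)), where ι : Fin i ↪ Fin n is the inclusion of the first i elements coming from Fin i ⊕ Fin j ≅ Fin n. -/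

import Mathlib

open Equiv

namespace Stmt3

/-- The standard equivalence `Fin i ⊕ Fin j ≃ Fin n` for `i + j = n`. -/
def finAdd {i j n : ℕ} (h : i + j = n) : Fin i ⊕ Fin j ≃ Fin n :=
  finSumFinEquiv.trans (finCongr h)

/-- The block embedding `Σi × Σj → Σn`. -/
def blockEmb {i j n : ℕ} (h : i + j = n) (p : Perm (Fin i) × Perm (Fin j)) :
    Perm (Fin n) :=
  (finAdd h).permCongr (Equiv.sumCongr p.1 p.2)

/-- The inclusion `Fin i ↪ Fin n` of the first `i` elements, via `Fin i ⊕ Fin j ≃ Fin n`. -/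
def ι {i j n : ℕ} (h : i + j = n) : Fin i → Fin n := fun a => finAdd h (Sum.inl a)

/-- The relation `(g, x) ~ (g·φ(h), h⁻¹ • x)` defining the induced `G`-set. -/
def IndRel {G H P : Type*} [Group G] [Group H] (φ : H → G) (act : H → P → P) :
    G × P → G × P → Prop :=
  fun a b => ∃ h : H, b = (a.1 * φ h, act h⁻¹ a.2)

/-- The induced `G`-set `Ind_H^G P`, a quotient of `G × P`. -/
def Ind {G H P : Type*} [Group G] [Group H] (φ : H → G) (act : H → P → P) : Type _ :=
  Quot (IndRel φ act)

/-- Class of a pair `(g, x)` in the induced `G`-set. -/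
def Ind.mk {G H P : Type*} [Group G] [Group H] (φ : H → G) (act : H → P → P)
    (a : G × P) : Ind φ act :=
  Quot.mk _ a

/-- The `G`-action on `Ind_H^G P`, by left multiplication on the first coordinate. -/
def Ind.smul {G H P : Type*} [Group G] [Group H] {φ : H → G} {act : H → P → P}
    (g : G) : Ind φ act → Ind φ act :=
  Quot.map (fun a => (g * a.1, a.2))
    (by
      rintro ⟨g1, x1⟩ ⟨g2, x2⟩ ⟨h, heq⟩
      refine ⟨h, ?_⟩
      simp only [Prod.ext_iff] at heq ⊢
      exact ⟨by rw [heq.1, mul_assoc], heq.2⟩)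

/-- The order on the induced `G`-poset: `[(g, x)] ≤ [(g', x')]` iff `g⁻¹g'` lies in (the
image of) `H` and `x ≤ (g⁻¹g') • x'`. -/
def indLe {G H P : Type*} [Group G] [Group H] (φ : H → G) (act : H → P → P)
    (le : P → P → Prop) (a b : Ind φ act) : Prop :=
  ∃ (g g' : G) (x x' : P) (hh : H),
    a = Ind.mk φ act (g, x) ∧ b = Ind.mk φ act (g', x') ∧
    g⁻¹ * g' = φ hh ∧ le x (act hh x')

/-- `Ω_{≤m}(α)`: nonempty subsets of `α` of cardinality at most `m`, ordered by
inclusion. -/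
def Omega (m : ℕ) (α : Type*) : Type _ :=
  {U : Finset α // U.Nonempty ∧ U.card ≤ m}

/-- The `(Σi × Σj)`-action on `Ω_{≤i'}(Fin i)`: the first factor acts elementwise and
the second factor acts trivially. -/
def omegaAct {i' i j : ℕ} (p : Perm (Fin i) × Perm (Fin j)) (U : Omega i' (Fin i)) :
    Omega i' (Fin i) :=
  ⟨U.val.image p.1, U.2.1.image p.1, Finset.card_image_le.trans U.2.2⟩

/-- `Ω_{≤i',i}(Fin n)`: flags `(U, V)` of subsets of `Fin n` with `∅ ≠ U ⊆ V`,
`|U| ≤ i'`, `|V| = i`, ordered by componentwise inclusion. -/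
def Flag (i' i n : ℕ) : Type _ :=
  {UV : Finset (Fin n) × Finset (Fin n) //
    UV.1.Nonempty ∧ UV.1 ⊆ UV.2 ∧ UV.1.card ≤ i' ∧ UV.2.card = i}

/-- The elementwise `Σn`-action on flags. -/
def flagAct {i' i n : ℕ} (σ : Perm (Fin n)) (F : Flag i' i n) : Flag i' i n :=
  ⟨(F.val.1.image σ, F.val.2.image σ),
    F.2.1.image σ,
    Finset.image_subset_image F.2.2.1,
    Finset.card_image_le.trans F.2.2.2.1,
    (Finset.card_image_of_injective _ σ.injective).trans F.2.2.2.2⟩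


section Aux
variable {i j n : ℕ} (hij : i + j = n)

lemma ι_inj : Function.Injective (ι hij) :=
  fun a b hab => Sum.inl_injective ((finAdd hij).injective hab)

def ι' (b : Fin j) : Fin n := finAdd hij (Sum.inr b)

lemma blockEmb_ι (p : Perm (Fin i) × Perm (Fin j)) (a : Fin i) :
    blockEmb hij p (ι hij a) = ι hij (p.1 a) := by
  simp [blockEmb, ι, Equiv.permCongr_apply]

lemma exists_block (π : Perm (Fin n))
    (hπ : ∀ a : Fin i, ∃ b : Fin i, π (ι hij a) = ι hij b) :
    ∃ p : Perm (Fin i) × Perm (Fin j), blockEmb hij p = π := by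
  choose f hf using hπ
  have hfinj : Function.Injective f := by
    intro a b hab
    apply ι_inj hij
    apply π.injective
    rw [hf, hf, hab]
  have hfbij := Finite.injective_iff_bijective.mp hfinj
  have hπ' : ∀ b : Fin j, ∃ c : Fin j, π (ι' hij b) = ι' hij c := by
    intro b
    have hx : π (ι' hij b) = finAdd hij ((finAdd hij).symm (π (ι' hij b))) := by simp
    rcases hs : (finAdd hij).symm (π (ι' hij b)) with a | c
    · exfalso
      obtain ⟨a0, ha0⟩ := hfbij.2 a
      have h1 : π (ι hij a0) = π (ι' hij b) := by
        rw [hf, ha0, hx, hs]; rfl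
      have := π.injective h1
      have := (finAdd hij).injective this
      simp [ι, ι'] at this
    · exact ⟨c, by rw [hx, hs]; rfl⟩
  choose g hg using hπ'
  have hginj : Function.Injective g := by
    intro a b hab
    apply Sum.inr_injective ((finAdd hij).injective (π.injective ?_))
    show π (ι' hij a) = π (ι' hij b)
    rw [hg, hg, hab]
  have hgbij := Finite.injective_iff_bijective.mp hginj
  refine ⟨(Equiv.ofBijective f hfbij, Equiv.ofBijective g hgbij), ?_⟩
  apply Equiv.ext
  intro x
  have hx : x = finAdd hij ((finAdd hij).symm x) := by simp
  rcases hs : (finAdd hij).symm x with a | c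
  · rw [hx, hs]
    show blockEmb hij _ (ι hij a) = _
    rw [blockEmb_ι]
    show ι hij (f a) = π (ι hij a)
    rw [hf]
  · rw [hx, hs]
    show blockEmb hij _ (ι' hij c) = _
    rw [show blockEmb hij (Equiv.ofBijective f hfbij, Equiv.ofBijective g hgbij) (ι' hij c)
        = ι' hij (g c) by simp [blockEmb, ι', Equiv.permCongr_apply, Equiv.ofBijective]]
    exact (hg c).symm

lemma exists_block_of_eq (σ τ : Perm (Fin n))
    (heq : (Finset.univ.image (ι hij)).image σ = (Finset.univ.image (ι hij)).image τ) :
    ∃ p : Perm (Fin i) × Perm (Fin j), blockEmb hij p = σ⁻¹ * τ := by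
  apply exists_block
  intro a
  have hm : τ (ι hij a) ∈ (Finset.univ.image (ι hij)).image σ := by
    rw [heq]
    exact Finset.mem_image_of_mem _ (Finset.mem_image_of_mem _ (Finset.mem_univ a))
  obtain ⟨y, hy, hyx⟩ := Finset.mem_image.mp hm
  obtain ⟨b, _, hb⟩ := Finset.mem_image.mp hy
  exact ⟨b, by simp [Equiv.Perm.mul_apply, ← hyx, ← hb]⟩

lemma key_eq {σ τ : Perm (Fin n)} {p : Perm (Fin i) × Perm (Fin j)}
    (hp : blockEmb hij p = σ⁻¹ * τ) {u w : Fin i} (huw : σ (ι hij u) = τ (ι hij w)) :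
    u = p.1 w := by
  apply ι_inj hij
  rw [← blockEmb_ι hij p w, hp]
  rw [Equiv.Perm.mul_apply, ← huw]
  simp

lemma top_card : (Finset.univ.image (ι hij)).card = i := by
  rw [Finset.card_image_of_injective _ (ι_inj hij), Finset.card_univ, Fintype.card_fin]

lemma blockEmb_image_top (p : Perm (Fin i) × Perm (Fin j)) :
    (Finset.univ.image (ι hij)).image (blockEmb hij p) = Finset.univ.image (ι hij) := by
  apply Finset.eq_of_subset_of_card_le
  · rw [Finset.image_subset_iff]
    intro x hx
    obtain ⟨a, -, rfl⟩ := Finset.mem_image.mp hx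
    rw [blockEmb_ι]
    exact Finset.mem_image_of_mem _ (Finset.mem_univ _)
  · rw [Finset.card_image_of_injective _ (blockEmb hij p).injective]

end Aux

section Main
variable {i' i j n : ℕ} (hij : i + j = n)

def F (σU : Perm (Fin n) × Omega i' (Fin i)) : Flag i' i n :=
  ⟨((σU.2.val.image (ι hij)).image σU.1, (Finset.univ.image (ι hij)).image σU.1),
   (σU.2.2.1.image _).image _,
   Finset.image_subset_image (Finset.image_subset_image (Finset.subset_univ _)),
   by rw [Finset.card_image_of_injective _ σU.1.injective,
          Finset.card_image_of_injective _ (ι_inj hij)]; exact σU.2.2.2,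
   by rw [Finset.card_image_of_injective _ σU.1.injective, top_card]⟩

lemma F_rel (σ : Perm (Fin n)) (U : Omega i' (Fin i)) (h : Perm (Fin i) × Perm (Fin j)) :
    F hij (σ * blockEmb hij h, omegaAct h⁻¹ U) = F hij (σ, U) := by
  apply Subtype.ext
  apply Prod.ext
  · show (((U.val.image h⁻¹.1).image (ι hij)).image (σ * blockEmb hij h))
        = (U.val.image (ι hij)).image σ
    simp only [Finset.image_image]
    apply Finset.image_congr
    intro a _
    show (σ * blockEmb hij h) (ι hij (h⁻¹.1 a)) = σ (ι hij a)
    rw [Equiv.Perm.mul_apply, blockEmb_ι]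
    congr 1
    show ι hij (h.1 (h.1⁻¹ a)) = ι hij a
    rw [Equiv.Perm.coe_inv, Equiv.apply_symm_apply]
  · show (Finset.univ.image (ι hij)).image (σ * blockEmb hij h)
        = (Finset.univ.image (ι hij)).image σ
    rw [Equiv.Perm.coe_mul, ← Finset.image_image, blockEmb_image_top]

lemma F_surj (FL : Flag i' i n) : ∃ a : Perm (Fin n) × Omega i' (Fin i), F hij a = FL := by
  obtain ⟨⟨U, V⟩, hUne, hUV, hUc, hVc⟩ := FL
  classical
  set T : Finset (Fin n) := Finset.univ.image (ι hij) with hT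
  have hTc : T.card = i := top_card hij
  have hcc : Tᶜ.card = Vᶜ.card := by
    rw [Finset.card_compl, Finset.card_compl, hTc, hVc]
  have hcc' : T.card = V.card := by rw [hTc, hVc]
  let e1 : {x // x ∈ T} ≃ {x // x ∈ V} := Finset.equivOfCardEq hcc'
  let e2 : {x // x ∈ Tᶜ} ≃ {x // x ∈ Vᶜ} := Finset.equivOfCardEq hcc
  let e2' : {x // ¬ x ∈ T} ≃ {x // ¬ x ∈ V} :=
    ((Equiv.subtypeEquivRight (fun x => by simp)).trans e2).trans
      (Equiv.subtypeEquivRight (fun x => by simp))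
  let σ : Perm (Fin n) :=
    ((Equiv.sumCompl (· ∈ T)).symm.trans (Equiv.sumCongr e1 e2')).trans
      (Equiv.sumCompl (· ∈ V))
  have hσ : ∀ x ∈ T, σ x ∈ V := by
    intro x hx
    show (Equiv.sumCompl (· ∈ V)) ((Equiv.sumCongr e1 e2') ((Equiv.sumCompl (· ∈ T)).symm x)) ∈ V
    rw [Equiv.sumCompl_symm_apply_of_pos hx]
    simp only [Equiv.sumCongr_apply, Sum.map_inl, Equiv.sumCompl_apply_inl]
    exact (e1 ⟨x, hx⟩).2
  have himg : T.image σ = V := by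
    apply Finset.eq_of_subset_of_card_le
    · rw [Finset.image_subset_iff]; exact hσ
    · rw [Finset.card_image_of_injective _ σ.injective, hTc, hVc]
  set U0 : Finset (Fin i) := Finset.univ.filter (fun a => σ (ι hij a) ∈ U) with hU0
  have hU0img : U0.image (fun a => σ (ι hij a)) = U := by
    apply Finset.Subset.antisymm
    · intro u hu
      obtain ⟨a, ha, rfl⟩ := Finset.mem_image.mp hu
      exact (Finset.mem_filter.mp ha).2
    · intro u hu
      have : u ∈ T.image σ := himg ▸ hUV hu
      obtain ⟨x, hx, rfl⟩ := Finset.mem_image.mp this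
      obtain ⟨a, -, rfl⟩ := Finset.mem_image.mp hx
      exact Finset.mem_image.mpr ⟨a, Finset.mem_filter.mpr ⟨Finset.mem_univ _, hu⟩, rfl⟩
  have hσι : Function.Injective (fun a => σ (ι hij a)) :=
    fun a b hab => ι_inj hij (σ.injective hab)
  have hU0c : U0.card ≤ i' := by
    rw [← Finset.card_image_of_injective U0 hσι, hU0img]; exact hUc
  have hU0ne : U0.Nonempty := by
    obtain ⟨u, hu⟩ := hUne
    rw [← hU0img] at hu
    obtain ⟨a, ha, -⟩ := Finset.mem_image.mp hu
    exact ⟨a, ha⟩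
  refine ⟨(σ, ⟨U0, hU0ne, hU0c⟩), Subtype.ext (Prod.ext ?_ ?_)⟩
  · show (U0.image (ι hij)).image σ = U
    rw [Finset.image_image]
    exact hU0img
  · exact himg

lemma F_inj (a b : Perm (Fin n) × Omega i' (Fin i)) (heq : F hij a = F hij b) :
    Quot.mk (IndRel (blockEmb hij) omegaAct) a = Quot.mk (IndRel (blockEmb hij) omegaAct) b := by
  obtain ⟨σ, U⟩ := a; obtain ⟨τ, W⟩ := b
  have h2 : (Finset.univ.image (ι hij)).image σ = (Finset.univ.image (ι hij)).image τ :=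
    congrArg (fun z : Flag i' i n => z.val.2) heq
  have h1 : (U.val.image (ι hij)).image σ = (W.val.image (ι hij)).image τ :=
    congrArg (fun z : Flag i' i n => z.val.1) heq
  obtain ⟨p, hp⟩ := exists_block_of_eq hij σ τ h2
  apply Quot.sound
  refine ⟨p, ?_⟩
  have hWU : W = omegaAct p⁻¹ U := by
    apply Subtype.ext
    show W.val = U.val.image p⁻¹.1
    apply Finset.ext
    intro w
    constructor
    · intro hw
      have : τ (ι hij w) ∈ (U.val.image (ι hij)).image σ := by
        rw [h1]
        exact Finset.mem_image_of_mem _ (Finset.mem_image_of_mem _ hw)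
      obtain ⟨y, hy, hyx⟩ := Finset.mem_image.mp this
      obtain ⟨u, hu, rfl⟩ := Finset.mem_image.mp hy
      have := key_eq hij hp hyx
      refine Finset.mem_image.mpr ⟨u, hu, ?_⟩
      show p.1⁻¹ u = w
      rw [this, Equiv.Perm.coe_inv, Equiv.symm_apply_apply]
    · intro hw
      obtain ⟨u, hu, rfl⟩ := Finset.mem_image.mp hw
      have : σ (ι hij u) ∈ (W.val.image (ι hij)).image τ := by
        rw [← h1]
        exact Finset.mem_image_of_mem _ (Finset.mem_image_of_mem _ hu)
      obtain ⟨y, hy, hyx⟩ := Finset.mem_image.mp this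
      obtain ⟨w2, hw2, rfl⟩ := Finset.mem_image.mp hy
      have hk := key_eq hij hp hyx.symm
      have hpw : p.1⁻¹ u = w2 := by rw [hk, Equiv.Perm.coe_inv, Equiv.symm_apply_apply]
      show p.1⁻¹ u ∈ W.val
      rw [hpw]
      exact hw2
  apply Prod.ext
  · show τ = σ * blockEmb hij p
    rw [hp, ← mul_assoc, mul_inv_cancel, one_mul]
  · exact hWU

end Main

/-- The induced `Σn`-poset `Ind_{Σi×Σj}^{Σn} Ω_{≤i'}(Fin i)` is `Σn`-equivariantly
order-isomorphic to `Ω_{≤i',i}(Fin n)`; the isomorphism sends the class of `(σ, U)` to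
the flag `(σ • ι(U), σ • ι(Fin i))`. -/
theorem statement3 (i' i j n : ℕ) (h1 : i' ≤ i) (hij : i + j = n) :
    ∃ e : Ind (blockEmb hij) (omegaAct (i' := i') (i := i) (j := j)) ≃ Flag i' i n,
      (∀ (σ : Perm (Fin n)) z, e (Ind.smul σ z) = flagAct σ (e z)) ∧
      (∀ a b, indLe (blockEmb hij) omegaAct
          (fun U V : Omega i' (Fin i) => U.val ⊆ V.val) a b ↔
        (e a).val.1 ⊆ (e b).val.1 ∧ (e a).val.2 ⊆ (e b).val.2) ∧
      (∀ (σ : Perm (Fin n)) (U : Omega i' (Fin i)),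
        (e (Ind.mk (blockEmb hij) omegaAct (σ, U))).val =
          ((U.val.image (ι hij)).image σ, (Finset.univ.image (ι hij)).image σ)) := by
  classical
  have hlift : ∀ a b, IndRel (blockEmb hij) (omegaAct (i' := i')) a b → F hij a = F hij b := by
    rintro ⟨σ, U⟩ b ⟨h, rfl⟩
    exact (F_rel hij σ U h).symm
  let eFun : Ind (blockEmb hij) (omegaAct (i' := i') (i := i) (j := j)) → Flag i' i n :=
    Quot.lift (F hij) hlift
  have hbij : Function.Bijective eFun := by
    constructor
    · intro a b hab
      obtain ⟨x, rfl⟩ := Quot.exists_rep a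
      obtain ⟨y, rfl⟩ := Quot.exists_rep b
      exact F_inj hij x y hab
    · intro FL
      obtain ⟨x, hx⟩ := F_surj hij FL
      exact ⟨Quot.mk _ x, hx⟩
  have he : ∀ c, (Equiv.ofBijective eFun hbij) (Ind.mk (blockEmb hij) omegaAct c)
      = F hij c := fun c => rfl
  refine ⟨Equiv.ofBijective eFun hbij, ?_, ?_, ?_⟩
  · intro σ z
    obtain ⟨⟨g, x⟩, rfl⟩ := Quot.exists_rep z
    show F hij (σ * g, x) = flagAct σ (F hij (g, x))
    apply Subtype.ext
    apply Prod.ext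
    · show (x.val.image (ι hij)).image (σ * g) = ((x.val.image (ι hij)).image g).image σ
      rw [Equiv.Perm.coe_mul, ← Finset.image_image]
    · show (Finset.univ.image (ι hij)).image (σ * g)
          = ((Finset.univ.image (ι hij)).image g).image σ
      rw [Equiv.Perm.coe_mul, ← Finset.image_image]
  · intro a b
    constructor
    · rintro ⟨g, g', x, x', hh, rfl, rfl, hgg, hxx⟩
      have hg' : g' = g * blockEmb hij hh := by
        rw [← hgg, mul_inv_cancel_left]
      rw [he, he]
      constructor
      · show (x.val.image (ι hij)).image g ⊆ (x'.val.image (ι hij)).image g'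
        intro y hy
        obtain ⟨z, hz, rfl⟩ := Finset.mem_image.mp hy
        obtain ⟨u, hu, rfl⟩ := Finset.mem_image.mp hz
        have := hxx hu
        obtain ⟨w, hw, rfl⟩ := Finset.mem_image.mp this
        refine Finset.mem_image.mpr ⟨ι hij w, Finset.mem_image_of_mem _ hw, ?_⟩
        rw [hg', Equiv.Perm.mul_apply, blockEmb_ι]
      · show (Finset.univ.image (ι hij)).image g ⊆ (Finset.univ.image (ι hij)).image g'
        rw [hg', Equiv.Perm.coe_mul, ← Finset.image_image, blockEmb_image_top]
    · intro hsub
      obtain ⟨⟨g, x⟩, rfl⟩ := Quot.exists_rep a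
      obtain ⟨⟨g', x'⟩, rfl⟩ := Quot.exists_rep b
      obtain ⟨hc1, hc2⟩ := hsub
      rw [show (Quot.mk (IndRel (blockEmb hij) omegaAct) (g, x))
            = Ind.mk (blockEmb hij) omegaAct (g, x) from rfl,
          show (Quot.mk (IndRel (blockEmb hij) omegaAct) (g', x'))
            = Ind.mk (blockEmb hij) omegaAct (g', x') from rfl, he, he] at hc1 hc2
      have heq : (Finset.univ.image (ι hij)).image g = (Finset.univ.image (ι hij)).image g' := by
        apply Finset.eq_of_subset_of_card_le hc2
        show ((Finset.univ.image (ι hij)).image g').card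
            ≤ ((Finset.univ.image (ι hij)).image g).card
        rw [Finset.card_image_of_injective _ g.injective,
            Finset.card_image_of_injective _ g'.injective]
      obtain ⟨p, hp⟩ := exists_block_of_eq hij g g' heq
      refine ⟨g, g', x, x', p, rfl, rfl, hp.symm, ?_⟩
      intro u hu
      have : g (ι hij u) ∈ (x'.val.image (ι hij)).image g' :=
        hc1 (Finset.mem_image_of_mem _ (Finset.mem_image_of_mem _ hu))
      obtain ⟨y, hy, hyx⟩ := Finset.mem_image.mp this
      obtain ⟨w, hw, rfl⟩ := Finset.mem_image.mp hy
      have hk := key_eq hij hp hyx.symm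
      show u ∈ x'.val.image p.1
      exact Finset.mem_image.mpr ⟨w, hw, hk.symm⟩
  · intro σ U
    rw [he]
    rfl


end Stmt3
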